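/- Let β_k ∈ (π/2, π) be defined for each k ≥ 2 as the unique solution in (π/2, π) of sin^2(β) h_{k-1}(β) = h_k(β), where h_k(t) = ∫_0^t sin^{2k-1}(τ) dτ. Then β_k → π/2 as k → ∞. -/

import Mathlib

open Real Filter

theorem beta_tendsto_pi_div_two
    (h : ℕ → ℝ → ℝ)
    (hh : ∀ m : ℕ, ∀ t : ℝ, h m t = ∫ τ in (0:ℝ)..t, Real.sin τ ^ (2 * m - 1))
    (β : ℕ → ℝ)
    (hβ : ∀ k : ℕ, 2 ≤ k → β k ∈ Set.Ioo (Real.pi / 2) Real.pi ∧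
      Real.sin (β k) ^ 2 * h (k - 1) (β k) = h k (β k)) :
    Filter.Tendsto β Filter.atTop (nhds (Real.pi / 2)) := by
  -- Key estimate: cos (β k) ^ 2 * (2k-1) ≤ 1 for k ≥ 2
  have key : ∀ k : ℕ, 2 ≤ k → Real.cos (β k) ^ 2 * (2 * (k : ℝ) - 1) ≤ 1 := by
    intro k hk
    obtain ⟨m, rfl⟩ := Nat.exists_eq_add_of_le hk
    obtain ⟨⟨hb1, hb2⟩, heq⟩ := hβ (2 + m) hk
    set b := β (2 + m) with hbdef
    have hbpos : (0 : ℝ) < b := lt_trans (by positivity) hb1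
    have he1 : 2 * (2 + m) - 1 = (2 * m + 1) + 2 := by omega
    have he2 : 2 * (2 + m - 1) - 1 = 2 * m + 1 := by omega
    rw [hh, hh, he1, he2] at heq
    rw [integral_sin_pow (2 * m + 1)] at heq
    have hs0 : Real.sin 0 = 0 := Real.sin_zero
    -- positivity of the integral
    have hI : 0 < ∫ τ in (0:ℝ)..b, Real.sin τ ^ (2 * m + 1) := by
      apply intervalIntegral.intervalIntegral_pos_of_pos_on
      · exact (Continuous.pow (Real.continuous_sin) _).intervalIntegrable 0 b
      · intro x hx
        exact pow_pos (Real.sin_pos_of_pos_of_lt_pi hx.1 (lt_trans hx.2 hb2)) _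
      · exact hbpos
    have hcos : Real.cos b ≤ 0 :=
      Real.cos_nonpos_of_pi_div_two_le_of_le (le_of_lt hb1)
        (le_trans (le_of_lt hb2) (by linarith [Real.pi_pos]))
    have hsinpos : 0 < Real.sin b := Real.sin_pos_of_pos_of_lt_pi hbpos hb2
    have hpyth : Real.sin b ^ 2 + Real.cos b ^ 2 = 1 := Real.sin_sq_add_cos_sq b
    have hspow : 0 ≤ Real.sin b ^ (2 * m + 1 + 1) := pow_nonneg (le_of_lt hsinpos) _
    -- simplify heq
    rw [hs0] at heq
    push_cast at heq
    set I := ∫ τ in (0:ℝ)..b, Real.sin τ ^ (2 * m + 1) with hIdef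
    have hcast : ((2 + m : ℕ) : ℝ) = 2 + (m : ℝ) := by push_cast; ring
    rw [hcast]
    have hterm : 0 ≤ -(Real.sin b ^ (2 * m + 1 + 1)) * Real.cos b := by
      have := mul_nonneg hspow (neg_nonneg.mpr hcos)
      nlinarith
    have hden : (0:ℝ) < (2 * m + 1 : ℝ) + 2 := by positivity
    have h1 : Real.sin b ^ 2 * ((2 * (m:ℝ) + 1) + 2) ≥ (2 * (m:ℝ) + 1) + 1 := by
      field_simp at heq
      simp only [zero_pow (Nat.succ_ne_zero _), zero_mul, zero_sub] at heq
      nlinarith [hI, hterm, heq, mul_pos hI hden]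
    nlinarith [h1, hpyth]
  -- From the key estimate, -cos (β k) → 0
  have hub : ∀ k : ℕ, 2 ≤ k → -Real.cos (β k) ≤ Real.sqrt (1 / (2 * (k : ℝ) - 1)) := by
    intro k hk
    have hk2 : (2:ℝ) ≤ (k:ℝ) := by exact_mod_cast hk
    have hden : (0:ℝ) < 2 * (k:ℝ) - 1 := by linarith
    have h1 : Real.cos (β k) ^ 2 ≤ 1 / (2 * (k:ℝ) - 1) := by
      rw [le_div_iff₀ hden]; exact key k hk
    obtain ⟨⟨hb1, hb2⟩, _⟩ := hβ k hk
    have hcos : Real.cos (β k) ≤ 0 :=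
      Real.cos_nonpos_of_pi_div_two_le_of_le (le_of_lt hb1)
        (le_trans (le_of_lt hb2) (by linarith [Real.pi_pos]))
    have hrw : -Real.cos (β k) = Real.sqrt (Real.cos (β k) ^ 2) := by
      rw [Real.sqrt_sq_eq_abs, abs_of_nonpos hcos]
    rw [hrw]
    exact Real.sqrt_le_sqrt h1
  have hsqrt0 : Tendsto (fun k : ℕ => Real.sqrt (1 / (2 * (k : ℝ) - 1))) atTop (nhds 0) := by
    have h1 : Tendsto (fun k : ℕ => 2 * (k : ℝ) - 1) atTop atTop := by
      apply Filter.tendsto_atTop_add_const_right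
      exact (tendsto_natCast_atTop_atTop).const_mul_atTop two_pos
    have h2 : Tendsto (fun k : ℕ => 1 / (2 * (k : ℝ) - 1)) atTop (nhds 0) := by
      simpa [Pi.inv_def] using h1.inv_tendsto_atTop
    have h3 : Tendsto Real.sqrt (nhds 0) (nhds 0) := by
      have := Real.continuous_sqrt.tendsto 0
      simpa using this
    exact h3.comp h2
  have hcos0 : Tendsto (fun k : ℕ => -Real.cos (β k)) atTop (nhds 0) := by
    apply tendsto_of_tendsto_of_tendsto_of_le_of_le' tendsto_const_nhds hsqrt0
    · filter_upwards [eventually_ge_atTop 2] with k hk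
      obtain ⟨⟨hb1, hb2⟩, _⟩ := hβ k hk
      have hcos : Real.cos (β k) ≤ 0 :=
        Real.cos_nonpos_of_pi_div_two_le_of_le (le_of_lt hb1)
          (le_trans (le_of_lt hb2) (by linarith [Real.pi_pos]))
      linarith
    · filter_upwards [eventually_ge_atTop 2] with k hk
      exact hub k hk
  -- β k = π/2 + arcsin (-cos (β k)) eventually
  have heqv : ∀ᶠ k in atTop, β k = Real.pi / 2 + Real.arcsin (-Real.cos (β k)) := by
    filter_upwards [eventually_ge_atTop 2] with k hk
    obtain ⟨⟨hb1, hb2⟩, _⟩ := hβ k hk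
    have : Real.arcsin (-Real.cos (β k)) = β k - Real.pi / 2 := by
      rw [← Real.sin_sub_pi_div_two]
      apply Real.arcsin_sin
      · linarith [Real.pi_pos]
      · linarith
    linarith [this]
  have hmain : Tendsto (fun k : ℕ => Real.pi / 2 + Real.arcsin (-Real.cos (β k))) atTop
      (nhds (Real.pi / 2)) := by
    have harcsin : Tendsto (fun k : ℕ => Real.arcsin (-Real.cos (β k))) atTop (nhds 0) := by
      have h0 : Tendsto Real.arcsin (nhds 0) (nhds 0) := by
        simpa [Real.arcsin_zero] using Real.continuous_arcsin.tendsto 0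
      exact h0.comp hcos0
    simpa using tendsto_const_nhds.add harcsin
  exact hmain.congr' (heqv.mono fun k hk => hk.symm)
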